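/- Let $\{x_k\}$ be a non-negative real sequence satisfying $x_{k+1} \le (1 - \lambda \gamma_k) x_k + \alpha_k$ for all $k \ge 1$, where $\gamma_k = c_\gamma k^{-a}$ and $\alpha_k = c_\alpha k^{-b}$ with $0 < a < 1$, $b > a$, $c_\gamma, c_\alpha > 0$, and $\lambda \gamma_1 \in (0,1)$. Then there exists a constant $C > 1/\lambda$ and an index $n_0$ such that $x_n \le C \cdot \alpha_n / \gamma_n$ for all $n \ge n_0$. -/

import Mathlib

open Real Filter

lemma aux_rpow_diff (p : ℝ) (hp : 0 < p) (K : ℝ) (hK : 1 ≤ K) :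
    K ^ (-p) - (K + 1) ^ (-p) ≤ p * K ^ (-p - 1) := by
  have hK0 : (0:ℝ) < K := lt_of_lt_of_le one_pos hK
  obtain ⟨c, hc, hslope⟩ := exists_hasDerivAt_eq_slope (fun t => t ^ (-p))
    (fun t => -p * t ^ (-p - 1)) (by linarith : K < K + 1)
    (fun t ht => (Real.continuousAt_rpow_const t (-p)
        (Or.inl (ne_of_gt (lt_of_lt_of_le hK0 ht.1)))).continuousWithinAt)
    (fun t ht => Real.hasDerivAt_rpow_const (Or.inl (ne_of_gt (lt_trans hK0 ht.1))))
  have hck : K ≤ c := le_of_lt hc.1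
  have hc0 : 0 < c := lt_of_lt_of_le hK0 hck
  have hb : c ^ (-p - 1) ≤ K ^ (-p - 1) :=
    Real.rpow_le_rpow_of_nonpos hK0 hck (by linarith)
  have : -p * c ^ (-p - 1) = (K + 1) ^ (-p) - K ^ (-p) := by
    simpa using hslope
  nlinarith [this, hb, hp]

/-- Convergence of a stochastic-approximation-type recursion: if a non-negative
sequence satisfies `x_{k+1} ≤ (1 - λ γ_k) x_k + α_k` with power-decay step sizes
`γ_k = c_γ k^{-a}` and perturbations `α_k = c_α k^{-b}`, `0 < a < 1`, `b > a`,
and `λ γ_1 ∈ (0,1)`, then eventually `x_n ≤ C α_n / γ_n` for some `C > 1/λ`. -/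
theorem stmt0 (x γ α : ℕ → ℝ) (a b cγ cα lam : ℝ)
    (hx : ∀ k, 0 ≤ x k)
    (hγ : ∀ k, γ k = cγ * (k : ℝ) ^ (-a))
    (hα : ∀ k, α k = cα * (k : ℝ) ^ (-b))
    (ha0 : 0 < a) (ha1 : a < 1) (hab : a < b)
    (hcγ : 0 < cγ) (hcα : 0 < cα)
    (hlam0 : 0 < lam * γ 1) (hlam1 : lam * γ 1 < 1)
    (hrec : ∀ k, 1 ≤ k → x (k + 1) ≤ (1 - lam * γ k) * x k + α k) :
    ∃ C, 1 / lam < C ∧ ∃ n0 : ℕ, ∀ n, n0 ≤ n → x n ≤ C * α n / γ n := by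
  set p : ℝ := b - a with hp_def
  have hp : 0 < p := by rw [hp_def]; linarith
  clear_value p
  set q : ℝ := cα / cγ with hq_def
  have hq : 0 < q := div_pos hcα hcγ
  have hqc : cγ * q = cα := by rw [hq_def]; field_simp
  clear_value q
  have hγ1 : γ 1 = cγ := by rw [hγ]; norm_num
  have hlam : 0 < lam := by
    by_contra h
    push_neg at h
    have : lam * γ 1 ≤ 0 := mul_nonpos_of_nonpos_of_nonneg h (by rw [hγ1]; linarith)
    linarith
  -- choose n1 with (k:ℝ)^(a-1) small for k ≥ n1
  have hε : 0 < lam * cγ / (2 * p) := by positivity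
  have htend : Tendsto (fun k : ℕ => (k : ℝ) ^ (a - 1)) atTop (nhds 0) := by
    have h1 : Tendsto (fun t : ℝ => t ^ (-(1 - a))) atTop (nhds 0) :=
      tendsto_rpow_neg_atTop (by linarith)
    have := h1.comp tendsto_natCast_atTop_atTop (α := ℕ)
    simpa [Function.comp_def, show -(1 - a) = a - 1 by ring] using this
  obtain ⟨N, hN⟩ := (htend.eventually (gt_mem_nhds hε)).exists_forall_of_atTop
  set n1 : ℕ := max N 1 with hn1_def
  have hn11 : 1 ≤ n1 := le_max_right _ _
  have hn1R : (1:ℝ) ≤ (n1:ℝ) := by exact_mod_cast hn11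
  have hsmall : ∀ k : ℕ, n1 ≤ k → (k : ℝ) ^ (a - 1) ≤ lam * cγ / (2 * p) :=
    fun k hk => le_of_lt (hN k (le_trans (le_max_left _ _) hk))
  have hγpos : ∀ k : ℕ, 1 ≤ k → 0 < γ k := by
    intro k hk
    have : (0:ℝ) < (k:ℝ) := by exact_mod_cast hk
    rw [hγ]; positivity
  have hαpos : ∀ k : ℕ, 1 ≤ k → 0 < α k := by
    intro k hk
    have : (0:ℝ) < (k:ℝ) := by exact_mod_cast hk
    rw [hα]; positivity
  set C : ℝ := max (2 / lam) (x n1 * γ n1 / α n1) with hC_def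
  have hCx : x n1 * γ n1 / α n1 ≤ C := le_max_right _ _
  have hC2 : 2 / lam ≤ C := le_max_left _ _
  clear_value C
  have hCpos : 0 < C := lt_of_lt_of_le (by positivity) hC2
  refine ⟨C, ?_, n1, ?_⟩
  · calc 1 / lam < 2 / lam := by
          rw [div_lt_div_iff₀ hlam hlam]; nlinarith
      _ ≤ C := hC2
  · intro n hn
    induction n, hn using Nat.le_induction with
    | base =>
      have hα1 := hαpos n1 hn11
      have hγ1' := hγpos n1 hn11
      have heq : x n1 * γ n1 / α n1 * (α n1 / γ n1) = x n1 := by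
        field_simp
      calc x n1 = x n1 * γ n1 / α n1 * (α n1 / γ n1) := heq.symm
        _ ≤ C * (α n1 / γ n1) :=
            mul_le_mul_of_nonneg_right hCx (by positivity)
        _ = C * α n1 / γ n1 := by ring
    | succ k hk IH =>
      have hk1 : 1 ≤ k := le_trans hn11 hk
      have hK1 : (1:ℝ) ≤ (k:ℝ) := by exact_mod_cast hk1
      have hK0 : (0:ℝ) < (k:ℝ) := lt_of_lt_of_le one_pos hK1
      set K : ℝ := (k:ℝ) with hK_def
      have hKk : (k:ℝ) = K := rfl
      have hcast : ((k + 1 : ℕ) : ℝ) = K + 1 := by push_cast; rw [hKk]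
      -- 1 - lam * γ k ≥ 0
      have hγle : γ k ≤ cγ := by
        rw [hγ, hKk]
        have h0 : K ^ (-a) ≤ 1 :=
          Real.rpow_le_one_of_one_le_of_nonpos hK1 (by linarith)
        nlinarith [h0, hcγ]
      have h1m : 0 ≤ 1 - lam * γ k := by
        have : lam * γ k ≤ lam * cγ := mul_le_mul_of_nonneg_left hγle (le_of_lt hlam)
        rw [hγ1] at hlam1
        linarith
      have hA : (0:ℝ) < K ^ (-a) := Real.rpow_pos_of_pos hK0 _
      have hB : (0:ℝ) < K ^ (-b) := Real.rpow_pos_of_pos hK0 _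
      have hP : (0:ℝ) < K ^ (-p) := Real.rpow_pos_of_pos hK0 _
      have hP' : (0:ℝ) < (K + 1) ^ (-p) := Real.rpow_pos_of_pos (by linarith) _
      have hAP : K ^ (-a) * K ^ (-p) = K ^ (-b) := by
        rw [← Real.rpow_add hK0]
        congr 1
        rw [hp_def]; ring
      have hdiv : ∀ t : ℝ, 0 < t → cα * t ^ (-b) / (cγ * t ^ (-a)) = q * t ^ (-p) := by
        intro t ht
        have hta : t ^ (-a) ≠ 0 := ne_of_gt (Real.rpow_pos_of_pos ht _)
        have h1 : t ^ (-b) = t ^ (-a) * t ^ (-p) := by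
          rw [← Real.rpow_add ht]
          congr 1
          rw [hp_def]; ring
        rw [h1, hq_def]
        field_simp
      -- the key inequality
      have hbig : K ^ (a - 1) ≤ lam * cγ / (2 * p) := by
        have := hsmall k hk
        rwa [hKk] at this
      have h2lam : 2 / lam ≤ C := hC2
      have hPb : K ^ (-p - 1) = K ^ (-b) * K ^ (a - 1) := by
        rw [← Real.rpow_add hK0]
        congr 1
        rw [hp_def]; ring
      have hmvt := aux_rpow_diff p hp K hK1
      have key : C * q * (K ^ (-p) - (K + 1) ^ (-p)) ≤ (lam * C - 1) * (cα * K ^ (-b)) := by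
        have s1 : C * q * (K ^ (-p) - (K + 1) ^ (-p)) ≤ C * q * (p * K ^ (-p - 1)) :=
          mul_le_mul_of_nonneg_left hmvt (by positivity)
        have s2 : C * q * (p * K ^ (-p - 1)) = C * q * p * K ^ (a - 1) * K ^ (-b) := by
          rw [hPb]; ring
        have s3 : C * q * p * K ^ (a - 1) * K ^ (-b)
            ≤ C * q * p * (lam * cγ / (2 * p)) * K ^ (-b) := by
          apply mul_le_mul_of_nonneg_right _ (le_of_lt hB)
          exact mul_le_mul_of_nonneg_left hbig (by positivity)
        have hpne : p ≠ 0 := ne_of_gt hp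
        have s4 : C * q * p * (lam * cγ / (2 * p)) * K ^ (-b)
            = C * lam * cα / 2 * K ^ (-b) := by
          rw [← hqc]
          field_simp
        have hClam : 2 ≤ lam * C := by
          rw [div_le_iff₀ hlam] at h2lam
          linarith
        have h0 : 0 ≤ (lam * C - 2) * cα := by
          apply mul_nonneg _ (le_of_lt hcα)
          linarith
        have inner : C * lam * cα / 2 ≤ (lam * C - 1) * cα := by linarith only [h0]
        have s5 : C * lam * cα / 2 * K ^ (-b) ≤ (lam * C - 1) * (cα * K ^ (-b)) := by
          have h6 := mul_le_mul_of_nonneg_right inner (le_of_lt hB)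
          linarith only [h6]
        linarith only [s1, s2, s3, s4, s5]
      -- put it together
      have step : (1 - lam * (cγ * K ^ (-a))) * (C * (q * K ^ (-p))) + cα * K ^ (-b)
          ≤ C * (q * (K + 1) ^ (-p)) := by
        have e1 : cγ * K ^ (-a) * (q * K ^ (-p)) = cα * K ^ (-b) := by
          rw [← hqc, ← hAP]; ring
        have e2 : (1 - lam * (cγ * K ^ (-a))) * (C * (q * K ^ (-p))) + cα * K ^ (-b)
            = C * (q * K ^ (-p)) - lam * C * (cα * K ^ (-b)) + cα * K ^ (-b) := by
          linear_combination (-(lam * C)) * e1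
        rw [e2]
        linarith only [key]
      have IH' : x k ≤ C * (q * K ^ (-p)) := by
        have h7 := IH
        rwa [hα, hγ, hKk, mul_div_assoc, hdiv K hK0] at h7
      calc x (k + 1) ≤ (1 - lam * γ k) * x k + α k := hrec k hk1
        _ ≤ (1 - lam * γ k) * (C * (q * K ^ (-p))) + α k :=
            by linarith [mul_le_mul_of_nonneg_left IH' h1m]
        _ = (1 - lam * (cγ * K ^ (-a))) * (C * (q * K ^ (-p))) + cα * K ^ (-b) := by
            rw [hγ, hα, hKk]
        _ ≤ C * (q * (K + 1) ^ (-p)) := step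
        _ = C * α (k + 1) / γ (k + 1) := by
            rw [hα, hγ, hcast, mul_div_assoc, hdiv (K + 1) (by linarith)]
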